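/- Let q be a prime power, m ≥ 2, r > 1 a divisor of q-1, 1 ≤ ℓ ≤ m-1, and let C'(q,m,r,ℓ) be the λ-constacyclic code of length n = (q^m-1)/r over GF(q) whose defining set is D' = { i ∈ ℤ_{q^m-1} : 1 ≤ wt(i) ≤ ℓ, i ≡ 1 (mod r) } (relative to a primitive element β of GF(q^m), λ = β^n). Then dim C'(q,m,r,ℓ) = (q^m - Σ_{i=0}^{ℓ} binom(m,i)(q-1)^i)/r. -/

import Mathlib

/-- The `λ`-constacyclic code of length `n` over `F` with defining set `D`:
codewords are coefficient vectors `c : Fin n → F` such that `∑ t, c t • β^(i·t) = 0`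
for every `i ∈ D`, i.e. the polynomial `c(x)` vanishes at `β^i` for all `i ∈ D`. -/
noncomputable def constaCode {F E : Type*} [Field F] [Field E] [Algebra F E]
    (β : E) (D : Finset ℕ) (n : ℕ) : Submodule F (Fin n → F) :=
  ⨅ i ∈ D, LinearMap.ker
    (∑ t : Fin n, (β ^ (i * (t : ℕ))) •
      ((Algebra.linearMap F E).comp (LinearMap.proj t : (Fin n → F) →ₗ[F] F)))

namespace StmtAux
open Finset Polynomial

/-- digit extraction from a base-q expansion -/
lemma digit_spec {q : ℕ} (hq : 1 < q) (m : ℕ) (f : ℕ → ℕ) (hf : ∀ j, f j < q) (t : ℕ) :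
    (∑ j ∈ range m, f j * q ^ j) / q ^ t % q = if t < m then f t else 0 := by
  induction m generalizing f t with
  | zero => simp
  | succ m ih =>
    have hq0 : 0 < q := by omega
    have hS : ∑ j ∈ range (m+1), f j * q ^ j
        = f 0 + q * ∑ j ∈ range m, f (j+1) * q ^ j := by
      rw [Finset.sum_range_succ' (fun j => f j * q ^ j) m, Finset.mul_sum]
      simp only [pow_zero, mul_one, pow_succ]
      rw [add_comm]
      congr 1
      refine Finset.sum_congr rfl fun j _ => by ring
    rw [hS]
    cases t with
    | zero =>
      simp only [pow_zero, Nat.div_one]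
      rw [Nat.add_mul_mod_self_left, Nat.mod_eq_of_lt (hf 0)]
      simp [Nat.zero_lt_succ]
    | succ t =>
      rw [pow_succ', ← Nat.div_div_eq_div_mul, Nat.add_mul_div_left _ _ hq0,
        Nat.div_eq_of_lt (hf 0), zero_add, ih (fun j => f (j+1)) (fun j => hf (j+1)) t]
      by_cases h : t < m <;> simp [h, Nat.succ_lt_succ_iff]

/-- reconstruction of a number from its digits -/
lemma digit_sum {q : ℕ} (hq : 1 < q) (m : ℕ) {i : ℕ} (hi : i < q ^ m) :
    ∑ j ∈ range m, (i / q ^ j % q) * q ^ j = i := by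
  induction m generalizing i with
  | zero => simp at hi ⊢; omega
  | succ m ih =>
    have hq0 : 0 < q := by omega
    have hdiv : i / q < q ^ m := by
      rw [pow_succ, mul_comm] at hi
      exact Nat.div_lt_of_lt_mul hi
    rw [Finset.sum_range_succ' (fun j => i / q ^ j % q * q ^ j) m]
    have : ∀ j, i / q ^ (j+1) % q * q ^ (j+1) = ((i / q) / q ^ j % q * q ^ j) * q := by
      intro j
      rw [pow_succ', ← Nat.div_div_eq_div_mul]
      ring
    simp only [this]
    rw [← Finset.sum_mul, ih hdiv]
    simp only [pow_zero, Nat.div_one, mul_one]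
    rw [mul_comm (i / q) q]
    exact Nat.div_add_mod i q

lemma geom_sum_digits {q : ℕ} (hq : 1 < q) (m : ℕ) :
    ∑ j ∈ range m, (q - 1) * q ^ j = q ^ m - 1 := by
  induction m with
  | zero => simp
  | succ m ih =>
    rw [Finset.sum_range_succ, ih, Nat.sub_mul, one_mul, pow_succ']
    have h1 : 1 ≤ q ^ m := Nat.one_le_pow _ _ (by omega)
    have h2 : q ^ m ≤ q * q ^ m := Nat.le_mul_of_pos_left _ (by omega)
    omega

/-- weight: number of nonzero base-q digits among the first m digits -/
def wt (q m i : ℕ) : ℕ := ((range m).filter (fun j => i / q ^ j % q ≠ 0)).card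

lemma digits_wt {q : ℕ} (hq : 1 < q) : ∀ m : ℕ, ∀ i < q ^ m,
    ((Nat.digits q i).filter (· ≠ 0)).length = wt q m i := by
  intro m
  induction m with
  | zero =>
    intro i hi
    simp only [pow_zero, Nat.lt_one_iff] at hi
    subst hi; simp [wt]
  | succ m ih =>
    intro i hi
    rcases Nat.eq_zero_or_pos i with h0 | h0
    · subst h0
      simp [wt, Nat.zero_div]
    · rw [Nat.digits_def' hq h0]
      have hdiv : i / q < q ^ m := by
        rw [pow_succ, mul_comm] at hi
        exact Nat.div_lt_of_lt_mul hi
      have hwt : wt q (m+1) i = (if i % q ≠ 0 then 1 else 0) + wt q m (i / q) := by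
        unfold wt
        rw [Finset.card_filter, Finset.card_filter,
          Finset.sum_range_succ' (fun j => if i / q ^ j % q ≠ 0 then 1 else 0) m]
        simp only [pow_zero, Nat.div_one]
        rw [add_comm]
        congr 1
        refine Finset.sum_congr rfl fun j _ => ?_
        rw [pow_succ', ← Nat.div_div_eq_div_mul]
      rw [hwt, ← ih (i / q) hdiv]
      by_cases hz : i % q = 0 <;> simp [List.filter_cons, hz] <;> omega

lemma rho_lemma {q m r : ℕ} (hq : 1 < q) (hm : 2 ≤ m) (hr : 1 < r) (hrq : r ∣ q - 1)
    {i : ℕ} (hi : i < q ^ m - 1) (hw : wt q m i ≤ m - 1) :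
    wt q m (i * q % (q ^ m - 1)) = wt q m i ∧ (i * q % (q ^ m - 1)) % r = i % r := by
  haveI : NeZero r := ⟨by omega⟩
  have hNq : 1 ≤ q ^ m := Nat.one_le_pow _ _ (by omega)
  have hiN : i < q ^ m := by omega
  set f : ℕ → ℕ := fun j => i / q ^ j % q with hf
  have hfq : ∀ j, f j < q := fun j => Nat.mod_lt _ (by omega)
  set m' := m - 1 with hm'
  have hmm : m = m' + 1 := by omega
  set f' : ℕ → ℕ := fun j => if j = 0 then f m' else f (j - 1) with hf'
  have hf'0 : f' 0 = f m' := rfl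
  have hf'succ : ∀ j, f' (j + 1) = f j := fun j => by
    rw [hf']; simp
  have hf'q : ∀ j, f' j < q := by
    intro j
    cases j with
    | zero => rw [hf'0]; exact hfq _
    | succ j => rw [hf'succ]; exact hfq _
  set i' := ∑ j ∈ range m, f' j * q ^ j with hi'
  have hrec : ∑ j ∈ range m, f j * q ^ j = i := digit_sum hq m hiN
  -- the key identity
  have key : q * i + f m' = i' + f m' * q ^ m := by
    have h1 : q * i = ∑ j ∈ range m, f j * q ^ (j + 1) := by
      rw [← hrec, Finset.mul_sum]
      exact Finset.sum_congr rfl fun j _ => by ring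
    have h2 : i' = (∑ j ∈ range m', f j * q ^ (j + 1)) + f m' := by
      rw [hi', hmm, Finset.sum_range_succ' (fun j => f' j * q ^ j) m']
      simp only [hf'succ, hf'0, pow_zero, mul_one]
    rw [h1, h2, hmm, Finset.sum_range_succ]
    omega
  -- some digit of i' vanishes
  have hj0 : ∃ j0 < m, f j0 = 0 := by
    by_contra hcon
    push_neg at hcon
    have he : (range m).filter (fun j => f j ≠ 0) = range m := by
      rw [Finset.filter_eq_self]
      intro j hj
      exact hcon j (Finset.mem_range.1 hj)
    have : wt q m i = m := by rw [wt, he, Finset.card_range]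
    omega
  obtain ⟨j0, hj0m, hj0⟩ := hj0
  have hj0' : ∃ j0' < m, f' j0' = 0 := by
    rcases eq_or_ne j0 m' with h | h
    · exact ⟨0, by omega, by rw [hf'0, ← h, hj0]⟩
    · exact ⟨j0 + 1, by omega, by rw [hf'succ, hj0]⟩
  obtain ⟨j0', hj0'm, hj0'z⟩ := hj0'
  have hi'N : i' < q ^ m - 1 := by
    have hle : ∀ j ∈ range m, f' j * q ^ j ≤ (q - 1) * q ^ j := fun j _ =>
      Nat.mul_le_mul_right _ (by have := hf'q j; omega)
    have hlt : f' j0' * q ^ j0' < (q - 1) * q ^ j0' := by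
      rw [hj0'z, zero_mul]
      exact Nat.mul_pos (by omega) (pow_pos (by omega) _)
    calc i' < ∑ j ∈ range m, (q - 1) * q ^ j :=
          Finset.sum_lt_sum hle ⟨j0', Finset.mem_range.2 hj0'm, hlt⟩
      _ = q ^ m - 1 := geom_sum_digits hq m
  have hrho : i * q % (q ^ m - 1) = i' := by
    have h3 : f m' ≤ f m' * q ^ m := Nat.le_mul_of_pos_right _ (by omega)
    have hmul : f m' * (q ^ m - 1) + f m' = f m' * q ^ m := by
      rw [Nat.mul_sub_one]
      omega
    have h4 : i * q = i' + f m' * (q ^ m - 1) := by rw [mul_comm]; omega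
    rw [h4, Nat.add_mul_mod_self_right, Nat.mod_eq_of_lt hi'N]
  have hdig' : ∀ t, t < m → i' / q ^ t % q = f' t := by
    intro t ht
    rw [hi', digit_spec hq m f' hf'q t, if_pos ht]
  constructor
  · -- weight preserved
    rw [hrho, wt]
    have hfe : (range m).filter (fun j => i' / q ^ j % q ≠ 0)
        = (range m).filter (fun j => f' j ≠ 0) := by
      apply Finset.filter_congr
      intro j hj
      rw [hdig' j (Finset.mem_range.1 hj)]
    rw [hfe, wt]
    apply Finset.card_bij' (fun j _ => if j = 0 then m' else j - 1)
      (fun j _ => if j = m' then 0 else j + 1)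
    · intro j hj
      simp only [Finset.mem_filter, Finset.mem_range] at hj ⊢
      cases j with
      | zero =>
        rw [hf'0] at hj
        simpa using ⟨by omega, hj.2⟩
      | succ j =>
        rw [hf'succ] at hj
        rw [if_neg (Nat.succ_ne_zero _)]
        simpa using ⟨by omega, hj.2⟩
    · intro j hj
      simp only [Finset.mem_filter, Finset.mem_range] at hj ⊢
      rcases eq_or_ne j m' with h | h
      · rw [if_pos h]
        refine ⟨by omega, ?_⟩
        rw [hf'0, ← h]
        exact hj.2
      · rw [if_neg h]
        refine ⟨by omega, ?_⟩
        rw [hf'succ]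
        exact hj.2
    · intro j hj
      simp only [Finset.mem_filter, Finset.mem_range] at hj
      cases j with
      | zero => rw [if_pos rfl, if_pos rfl]
      | succ j =>
        rw [if_neg (Nat.succ_ne_zero _), Nat.succ_sub_one, if_neg (by omega), ]
    · intro j hj
      simp only [Finset.mem_filter, Finset.mem_range] at hj
      rcases eq_or_ne j m' with h | h
      · rw [if_pos h, if_pos rfl, h]
      · rw [if_neg h, if_neg (Nat.succ_ne_zero _), Nat.succ_sub_one]
  · -- residue preserved
    rw [hrho]
    have hq1 : (q : ZMod r) = 1 := by
      have hd : ((q - 1 : ℕ) : ZMod r) = 0 := (ZMod.natCast_eq_zero_iff _ _).2 hrq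
      have he : q = (q - 1) + 1 := by omega
      rw [he, Nat.cast_add, hd, Nat.cast_one, zero_add]
    have hsum : ∑ j ∈ range m, f' j = ∑ j ∈ range m, f j := by
      rw [hmm, Finset.sum_range_succ' f' m', Finset.sum_range_succ f m']
      simp only [hf'succ, hf'0]
    have hcast : (i' : ZMod r) = (i : ZMod r) := by
      rw [hi', ← hrec]
      push_cast
      simp only [hq1, one_pow, mul_one]
      exact_mod_cast congrArg (Nat.cast : ℕ → ZMod r) hsum
    have hv := congrArg ZMod.val hcast
    rwa [ZMod.val_natCast, ZMod.val_natCast] at hv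

/-- shift map on nonzero digits -/
def sig (q t d : ℕ) : ℕ := (d - 1 + t) % (q - 1) + 1

/-- the position of the lowest nonzero digit -/
def mdx (q m i : ℕ) : ℕ :=
  if h : ((range m).filter (fun j => i / q ^ j % q ≠ 0)).Nonempty
  then ((range m).filter (fun j => i / q ^ j % q ≠ 0)).min' h else 0

/-- replace the lowest nonzero digit `d` by `sig q t d` -/
def sh (q m t i : ℕ) : ℕ :=
  ∑ j ∈ range m,
    Function.update (fun j => i / q ^ j % q) (mdx q m i)
      (sig q t (i / q ^ (mdx q m i) % q)) j * q ^ j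

lemma sig_mem {q : ℕ} (hq : 1 < q) {d : ℕ} (hd1 : 1 ≤ d) (hd2 : d ≤ q - 1) (t : ℕ) :
    1 ≤ sig q t d ∧ sig q t d ≤ q - 1 := by
  have h := Nat.mod_lt (d - 1 + t) (y := q - 1) (by omega)
  unfold sig; omega

lemma sig_inv {q : ℕ} (hq : 1 < q) {d : ℕ} (hd1 : 1 ≤ d) (hd2 : d ≤ q - 1)
    {t t' : ℕ} (hdvd : (q - 1) ∣ t + t') : sig q t' (sig q t d) = d := by
  obtain ⟨c, hc⟩ := hdvd
  unfold sig
  rw [Nat.add_sub_cancel, Nat.mod_add_mod, add_assoc, hc]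
  rw [Nat.add_mul_mod_self_left, Nat.mod_eq_of_lt (by omega)]
  omega

lemma sig_cast {q r : ℕ} (hq : 1 < q) (hr : 1 < r) (hrq : r ∣ q - 1)
    {d : ℕ} (hd1 : 1 ≤ d) (t : ℕ) : ((sig q t d : ℕ) : ZMod r) = (d : ZMod r) + t := by
  have hmod : (((d - 1 + t) % (q - 1) : ℕ) : ZMod r) = ((d - 1 + t : ℕ) : ZMod r) := by
    have h := Nat.div_add_mod (d - 1 + t) (q - 1)
    have hq0 : ((q - 1 : ℕ) : ZMod r) = 0 := (ZMod.natCast_eq_zero_iff _ _).2 hrq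
    calc (((d - 1 + t) % (q - 1) : ℕ) : ZMod r)
        = (((q-1) * ((d-1+t)/(q-1)) + (d-1+t) % (q-1) : ℕ) : ZMod r) := by
          push_cast [hq0]; ring
      _ = ((d - 1 + t : ℕ) : ZMod r) := by rw [h]
  unfold sig
  push_cast [hmod]
  rw [Nat.cast_sub hd1]
  push_cast
  ring

section
variable {q m : ℕ}

lemma mdx_spec (hq : 1 < q) {i : ℕ} (hw : 1 ≤ wt q m i) :
    mdx q m i < m ∧ i / q ^ (mdx q m i) % q ≠ 0 := by
  have hne : ((range m).filter (fun j => i / q ^ j % q ≠ 0)).Nonempty :=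
    Finset.card_pos.1 (by exact hw)
  have hmem := Finset.min'_mem _ hne
  rw [mdx, dif_pos hne]
  have := Finset.mem_filter.1 hmem
  exact ⟨Finset.mem_range.1 this.1, this.2⟩

lemma sh_digits (hq : 1 < q) {i : ℕ} (hw : 1 ≤ wt q m i) (t : ℕ) (j : ℕ) :
    sh q m t i / q ^ j % q = if j < m then
      Function.update (fun j => i / q ^ j % q) (mdx q m i)
        (sig q t (i / q ^ (mdx q m i) % q)) j else 0 := by
  obtain ⟨hm1, hm2⟩ := mdx_spec hq hw
  apply digit_spec hq
  intro j'
  rw [Function.update_apply]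
  split
  · have h1 : 1 ≤ i / q ^ (mdx q m i) % q := by omega
    have h2 : i / q ^ (mdx q m i) % q ≤ q - 1 := by
      have := Nat.mod_lt (i / q ^ (mdx q m i)) (y := q) (by omega); omega
    have := (sig_mem hq h1 h2 t).2
    omega
  · exact Nat.mod_lt _ (by omega)

lemma sh_lt (hq : 1 < q) {i : ℕ} (hw : 1 ≤ wt q m i) (t : ℕ) :
    sh q m t i < q ^ m := by
  obtain ⟨hm1, hm2⟩ := mdx_spec hq hw
  have hle : sh q m t i ≤ ∑ j ∈ range m, (q - 1) * q ^ j := by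
    apply Finset.sum_le_sum
    intro j _
    apply Nat.mul_le_mul_right
    rw [Function.update_apply]
    split
    · have h1 : 1 ≤ i / q ^ (mdx q m i) % q := by omega
      have h2 : i / q ^ (mdx q m i) % q ≤ q - 1 := by
        have := Nat.mod_lt (i / q ^ (mdx q m i)) (y := q) (by omega); omega
      exact (sig_mem hq h1 h2 t).2
    · have := Nat.mod_lt (i / q ^ j) (y := q) (by omega); omega
  rw [geom_sum_digits hq m] at hle
  have : 1 ≤ q ^ m := Nat.one_le_pow _ _ (by omega)
  omega

lemma sh_supp (hq : 1 < q) {i : ℕ} (hw : 1 ≤ wt q m i) (t : ℕ) :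
    ((range m).filter (fun j => sh q m t i / q ^ j % q ≠ 0))
      = ((range m).filter (fun j => i / q ^ j % q ≠ 0)) := by
  obtain ⟨hm1, hm2⟩ := mdx_spec hq hw
  apply Finset.filter_congr
  intro j hj
  rw [Finset.mem_range] at hj
  rw [sh_digits hq hw t j, if_pos hj, Function.update_apply]
  rcases eq_or_ne j (mdx q m i) with h | h
  · rw [if_pos h, h]
    have h1 : 1 ≤ i / q ^ (mdx q m i) % q := by omega
    have h2 : i / q ^ (mdx q m i) % q ≤ q - 1 := by
      have := Nat.mod_lt (i / q ^ (mdx q m i)) (y := q) (by omega); omega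
    have := (sig_mem hq h1 h2 t).1
    constructor <;> intro <;> omega
  · rw [if_neg h]

lemma sh_wt (hq : 1 < q) {i : ℕ} (hw : 1 ≤ wt q m i) (t : ℕ) :
    wt q m (sh q m t i) = wt q m i := by
  rw [wt, sh_supp hq hw t, wt]

lemma sh_mdx (hq : 1 < q) {i : ℕ} (hw : 1 ≤ wt q m i) (t : ℕ) :
    mdx q m (sh q m t i) = mdx q m i := by
  rw [mdx, mdx, sh_supp hq hw t]

lemma sh_inv (hq : 1 < q) {i : ℕ} (hi : i < q ^ m) (hw : 1 ≤ wt q m i)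
    {t t' : ℕ} (hdvd : (q - 1) ∣ t + t') : sh q m t' (sh q m t i) = i := by
  obtain ⟨hm1, hm2⟩ := mdx_spec hq hw
  have hw' : 1 ≤ wt q m (sh q m t i) := by rw [sh_wt hq hw t]; exact hw
  have h1 : 1 ≤ i / q ^ (mdx q m i) % q := by omega
  have h2 : i / q ^ (mdx q m i) % q ≤ q - 1 := by
    have := Nat.mod_lt (i / q ^ (mdx q m i)) (y := q) (by omega); omega
  have hdef : sh q m t' (sh q m t i) = ∑ j ∈ range m,
      Function.update (fun j => sh q m t i / q ^ j % q) (mdx q m (sh q m t i))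
        (sig q t' (sh q m t i / q ^ (mdx q m (sh q m t i)) % q)) j * q ^ j := rfl
  rw [hdef, sh_mdx hq hw t]
  have hstep : ∀ j ∈ range m,
      Function.update (fun j => sh q m t i / q ^ j % q) (mdx q m i)
        (sig q t' (sh q m t i / q ^ (mdx q m i) % q)) j * q ^ j
      = (i / q ^ j % q) * q ^ j := by
    intro j hj
    rw [Finset.mem_range] at hj
    congr 1
    rw [Function.update_apply]
    rw [sh_digits hq hw t (mdx q m i), if_pos hm1, Function.update_self]
    rcases eq_or_ne j (mdx q m i) with h | h
    · rw [if_pos h, h]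
      rw [sig_inv hq h1 h2 hdvd]
    · rw [if_neg h]
      rw [sh_digits hq hw t j, if_pos hj, Function.update_apply, if_neg h]
  rw [Finset.sum_congr rfl hstep]
  exact digit_sum hq m hi

lemma sh_cast {r : ℕ} (hq : 1 < q) (hr : 1 < r) (hrq : r ∣ q - 1)
    {i : ℕ} (hi : i < q ^ m) (hw : 1 ≤ wt q m i) (t : ℕ) :
    ((sh q m t i : ℕ) : ZMod r) = (i : ZMod r) + t := by
  obtain ⟨hm1, hm2⟩ := mdx_spec hq hw
  have h1 : 1 ≤ i / q ^ (mdx q m i) % q := by omega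
  have hq1 : (q : ZMod r) = 1 := by
    have hd : ((q - 1 : ℕ) : ZMod r) = 0 := (ZMod.natCast_eq_zero_iff _ _).2 hrq
    have he : q = (q - 1) + 1 := by omega
    rw [he, Nat.cast_add, hd, Nat.cast_one, zero_add]
  have hmem : mdx q m i ∈ range m := Finset.mem_range.2 hm1
  have hsum : ∑ j ∈ range m, Function.update (fun j => i / q ^ j % q) (mdx q m i)
      (sig q t (i / q ^ (mdx q m i) % q)) j
      = sig q t (i / q ^ (mdx q m i) % q)
        + ∑ j ∈ (range m).erase (mdx q m i), i / q ^ j % q := by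
    rw [Finset.sum_update_of_mem hmem, Finset.sdiff_singleton_eq_erase]
  have hisum : (∑ j ∈ range m, i / q ^ j % q)
      = i / q ^ (mdx q m i) % q + ∑ j ∈ (range m).erase (mdx q m i), i / q ^ j % q :=
    (Finset.add_sum_erase _ _ hmem).symm
  have hcast1 : ((sh q m t i : ℕ) : ZMod r)
      = ((∑ j ∈ range m, Function.update (fun j => i / q ^ j % q) (mdx q m i)
          (sig q t (i / q ^ (mdx q m i) % q)) j : ℕ) : ZMod r) := by
    rw [sh]
    push_cast [hq1]
    simp
  have hcast2 : ((i : ℕ) : ZMod r) = ((∑ j ∈ range m, i / q ^ j % q : ℕ) : ZMod r) := by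
    conv_lhs => rw [← digit_sum hq m hi]
    push_cast [hq1]
    simp
  rw [hcast1, hsum, hcast2, hisum]
  push_cast
  rw [sig_cast hq hr hrq h1 t]
  ring

end

section
variable {q : ℕ}

lemma wt_succ (m i : ℕ) :
    wt q (m + 1) i = (if i % q ≠ 0 then 1 else 0) + wt q m (i / q) := by
  unfold wt
  rw [Finset.card_filter, Finset.card_filter,
    Finset.sum_range_succ' (fun j => if i / q ^ j % q ≠ 0 then 1 else 0) m]
  simp only [pow_zero, Nat.div_one]
  rw [add_comm]
  congr 1
  refine Finset.sum_congr rfl fun j _ => ?_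
  rw [pow_succ', ← Nat.div_div_eq_div_mul]

lemma wt_zero_iff (hq : 1 < q) (m : ℕ) {i : ℕ} (hi : i < q ^ m) :
    wt q m i = 0 ↔ i = 0 := by
  constructor
  · intro h
    rw [wt, Finset.card_eq_zero, Finset.filter_eq_empty_iff] at h
    rw [← digit_sum hq m hi]
    apply Finset.sum_eq_zero
    intro j hj
    have := h hj
    simp only [ne_eq, not_not] at this
    rw [this, zero_mul]
  · rintro rfl
    rw [wt]
    simp

/-- count of numbers below q^m with weight exactly w -/
lemma card_wt (hq : 1 < q) : ∀ m w : ℕ,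
    ((range (q ^ m)).filter (fun i => wt q m i = w)).card = m.choose w * (q - 1) ^ w := by
  intro m
  induction m with
  | zero =>
    intro w
    have : range (q ^ 0) = {0} := by rw [pow_zero]; rfl
    rw [this]
    cases w with
    | zero => simp [wt]
    | succ w => simp [wt, Nat.choose_eq_zero_of_lt (Nat.succ_pos w)]
  | succ m ih =>
    intro w
    have hq0 : 0 < q := by omega
    -- bijection with pairs (lowest digit, rest)
    have hbij : ((range (q ^ (m+1))).filter (fun i => wt q (m+1) i = w)).card
        = (((range q) ×ˢ (range (q ^ m))).filter
            (fun p => (if p.1 ≠ 0 then 1 else 0) + wt q m p.2 = w)).card := by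
      apply Finset.card_bij' (fun i _ => ((i % q : ℕ), (i / q : ℕ)))
        (fun p _ => p.1 + q * p.2)
      · intro i hi
        simp only [Finset.mem_filter, Finset.mem_range, Finset.mem_product] at hi ⊢
        refine ⟨⟨Nat.mod_lt _ hq0, ?_⟩, ?_⟩
        · rw [pow_succ, mul_comm] at hi
          exact Nat.div_lt_of_lt_mul hi.1
        · rw [← wt_succ m i, hi.2]
      · intro p hp
        simp only [Finset.mem_filter, Finset.mem_range, Finset.mem_product] at hp ⊢
        obtain ⟨⟨h1, h2⟩, h3⟩ := hp
        constructor
        · calc p.1 + q * p.2 < q + q * p.2 := by omega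
            _ = q * (p.2 + 1) := by ring
            _ ≤ q * q ^ m := Nat.mul_le_mul_left _ (by omega)
            _ = q ^ (m + 1) := (pow_succ' q m).symm
        · rw [wt_succ m _, Nat.add_mul_mod_self_left, Nat.mod_eq_of_lt h1,
            Nat.add_mul_div_left _ _ hq0, Nat.div_eq_of_lt h1, zero_add]
          exact h3
      · intro i _
        rw [add_comm, Nat.div_add_mod i q]
      · intro p hp
        simp only [Finset.mem_filter, Finset.mem_range, Finset.mem_product] at hp
        obtain ⟨⟨h1, h2⟩, h3⟩ := hp
        have e1 : (p.1 + q * p.2) % q = p.1 := by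
          rw [Nat.add_mul_mod_self_left, Nat.mod_eq_of_lt h1]
        have e2 : (p.1 + q * p.2) / q = p.2 := by
          rw [Nat.add_mul_div_left _ _ hq0, Nat.div_eq_of_lt h1, zero_add]
        rw [e1, e2]
    rw [hbij]
    -- split according to whether the lowest digit vanishes
    rw [← Finset.card_filter_add_card_filter_not
      (p := fun p : ℕ × ℕ => p.1 = 0)]
    have hz : ((((range q) ×ˢ (range (q ^ m))).filter
        (fun p => (if p.1 ≠ 0 then 1 else 0) + wt q m p.2 = w)).filter
          (fun p => p.1 = 0))
        = {(0 : ℕ)} ×ˢ ((range (q ^ m)).filter (fun b => wt q m b = w)) := by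
      ext ⟨a, b⟩
      simp only [Finset.mem_filter, Finset.mem_product, Finset.mem_range,
        Finset.mem_singleton]
      constructor
      · rintro ⟨⟨⟨ha, hb⟩, hcond⟩, rfl⟩
        simp only [ne_eq, not_true_eq_false, if_neg, reduceIte] at hcond
        omega
      · rintro ⟨rfl, hb, hw'⟩
        refine ⟨⟨⟨by omega, hb⟩, ?_⟩, rfl⟩
        simp only [ne_eq, not_true_eq_false, reduceIte]
        omega
    rw [hz, Finset.card_product, Finset.card_singleton, one_mul, ih w]
    cases w with
    | zero =>
      have hnz : ((((range q) ×ˢ (range (q ^ m))).filter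
          (fun p => (if p.1 ≠ 0 then 1 else 0) + wt q m p.2 = 0)).filter
            (fun p => ¬ p.1 = 0)) = ∅ := by
        rw [Finset.filter_eq_empty_iff]
        rintro ⟨a, b⟩ hab
        simp only [Finset.mem_filter] at hab
        obtain ⟨-, hcond⟩ := hab
        intro hne
        rw [if_pos hne] at hcond
        omega
      rw [hnz]
      simp
    | succ w =>
      have hnz : ((((range q) ×ˢ (range (q ^ m))).filter
          (fun p => (if p.1 ≠ 0 then 1 else 0) + wt q m p.2 = w + 1)).filter
            (fun p => ¬ p.1 = 0))
          = ((range q).filter (fun a => ¬ a = 0)) ×ˢ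
              ((range (q ^ m)).filter (fun b => wt q m b = w)) := by
        ext ⟨a, b⟩
        simp only [Finset.mem_filter, Finset.mem_product, Finset.mem_range]
        constructor
        · rintro ⟨⟨⟨ha, hb⟩, hcond⟩, hne⟩
          rw [if_pos hne] at hcond
          exact ⟨⟨ha, hne⟩, hb, by omega⟩
        · rintro ⟨⟨ha, hne⟩, hb, hw'⟩
          refine ⟨⟨⟨ha, hb⟩, ?_⟩, hne⟩
          rw [if_pos hne]
          omega
      rw [hnz, Finset.card_product, ih w]
      have hcq : ((range q).filter (fun a => ¬ a = 0)).card = q - 1 := by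
        have : (range q).filter (fun a => ¬ a = 0) = (range q).erase 0 := by
          ext a; simp [Finset.mem_erase, and_comm]
        rw [this, Finset.card_erase_of_mem (Finset.mem_range.2 (by omega)),
          Finset.card_range]
      rw [hcq, Nat.choose_succ_succ]
      ring
end

section
variable {q m r ℓ : ℕ}

lemma mod_cast_iff (hr : 1 < r) (i : ℕ) : i % r = 1 ↔ (i : ZMod r) = 1 := by
  haveI : NeZero r := ⟨by omega⟩
  haveI : Fact (1 < r) := ⟨hr⟩
  constructor
  · intro h
    rw [← ZMod.natCast_mod, h, Nat.cast_one]
  · intro h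
    have := congrArg ZMod.val h
    rwa [ZMod.val_natCast, ZMod.val_one] at this

lemma cardA_shift (hq : 1 < q) (hr : 1 < r) (hrq : r ∣ q - 1) (z : ZMod r) (t : ℕ) :
    ((range (q ^ m)).filter
      (fun i => 1 ≤ wt q m i ∧ wt q m i ≤ ℓ ∧ (i : ZMod r) = z)).card
    = ((range (q ^ m)).filter
      (fun i => 1 ≤ wt q m i ∧ wt q m i ≤ ℓ ∧ (i : ZMod r) = z + t)).card := by
  haveI : NeZero r := ⟨by omega⟩
  set t' : ℕ := (q - 1) - t % (q - 1) with ht'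
  have htm : t % (q - 1) ≤ t := Nat.mod_le _ _
  have htq : t % (q - 1) < q - 1 := Nat.mod_lt _ (by omega)
  have hdvd : (q - 1) ∣ t + t' := by
    have hsub : t - t % (q - 1) = (q - 1) * (t / (q - 1)) := by
      have := Nat.div_add_mod t (q - 1); omega
    have : t + t' = (q - 1) * (1 + t / (q - 1)) := by
      rw [Nat.mul_add, mul_one, ← hsub]; omega
    exact ⟨_, this⟩
  have hdvd' : (q - 1) ∣ t' + t := by rwa [add_comm]
  have hrt : ((t + t' : ℕ) : ZMod r) = 0 :=
    (ZMod.natCast_eq_zero_iff _ _).2 (dvd_trans hrq hdvd)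
  apply Finset.card_bij' (fun i _ => sh q m t i) (fun i _ => sh q m t' i)
  · intro i hi
    simp only [Finset.mem_filter, Finset.mem_range] at hi ⊢
    obtain ⟨h1, h2, h3, h4⟩ := hi
    exact ⟨sh_lt hq h2 t, by rw [sh_wt hq h2 t]; exact h2,
      by rw [sh_wt hq h2 t]; exact h3, by rw [sh_cast hq hr hrq h1 h2 t, h4]⟩
  · intro i hi
    simp only [Finset.mem_filter, Finset.mem_range] at hi ⊢
    obtain ⟨h1, h2, h3, h4⟩ := hi
    refine ⟨sh_lt hq h2 t', by rw [sh_wt hq h2 t']; exact h2,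
      by rw [sh_wt hq h2 t']; exact h3, ?_⟩
    rw [sh_cast hq hr hrq h1 h2 t', h4, add_assoc]
    have : (t : ZMod r) + (t' : ZMod r) = 0 := by
      rw [← Nat.cast_add]; exact hrt
    rw [this, add_zero]
  · intro i hi
    simp only [Finset.mem_filter, Finset.mem_range] at hi
    exact sh_inv hq hi.1 hi.2.1 hdvd
  · intro i hi
    simp only [Finset.mem_filter, Finset.mem_range] at hi
    exact sh_inv hq hi.1 hi.2.1 hdvd'

lemma count_main (hq : 1 < q) (hm : 2 ≤ m) (hr : 1 < r) (hrq : r ∣ q - 1)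
    (hℓ1 : 1 ≤ ℓ) (hℓ2 : ℓ ≤ m - 1) :
    r * ((range (q ^ m - 1)).filter
        (fun i => 1 ≤ wt q m i ∧ wt q m i ≤ ℓ ∧ i % r = 1)).card
      = ∑ w ∈ Icc 1 ℓ, m.choose w * (q - 1) ^ w := by
  haveI : NeZero r := ⟨by omega⟩
  have hNq : 1 ≤ q ^ m := Nat.one_le_pow _ _ (by omega)
  -- weight of q^m - 1 is m
  have hwtN : wt q m (q ^ m - 1) = m := by
    have hd : ∀ t, t < m → (q ^ m - 1) / q ^ t % q = q - 1 := by
      intro t ht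
      rw [← geom_sum_digits hq m, digit_spec hq m _ (fun j => by omega) t, if_pos ht]
    rw [wt]
    have : (range m).filter (fun j => (q ^ m - 1) / q ^ j % q ≠ 0) = range m := by
      rw [Finset.filter_eq_self]
      intro j hj
      rw [hd j (Finset.mem_range.1 hj)]
      omega
    rw [this, Finset.card_range]
  -- D₂ = A 1
  have hD2 : (range (q ^ m - 1)).filter
        (fun i => 1 ≤ wt q m i ∧ wt q m i ≤ ℓ ∧ i % r = 1)
      = (range (q ^ m)).filter
        (fun i => 1 ≤ wt q m i ∧ wt q m i ≤ ℓ ∧ (i : ZMod r) = 1) := by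
    ext i
    simp only [Finset.mem_filter, Finset.mem_range]
    constructor
    · rintro ⟨h1, h2, h3, h4⟩
      exact ⟨by omega, h2, h3, (mod_cast_iff hr i).1 h4⟩
    · rintro ⟨h1, h2, h3, h4⟩
      refine ⟨?_, h2, h3, (mod_cast_iff hr i).2 h4⟩
      rcases eq_or_ne i (q ^ m - 1) with h | h
      · rw [h, hwtN] at h3; omega
      · omega
  rw [hD2]
  -- partition B into fibers of the residue map
  have hfib : ((range (q ^ m)).filter (fun i => 1 ≤ wt q m i ∧ wt q m i ≤ ℓ)).card
      = ∑ z : ZMod r, ((range (q ^ m)).filter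
          (fun i => 1 ≤ wt q m i ∧ wt q m i ≤ ℓ ∧ (i : ZMod r) = z)).card := by
    have hfib0 := Finset.card_eq_sum_card_fiberwise
      (s := (range (q ^ m)).filter (fun i => 1 ≤ wt q m i ∧ wt q m i ≤ ℓ))
      (f := fun i : ℕ => (i : ZMod r)) (t := Finset.univ) (fun i _ => Finset.mem_univ _)
    rw [hfib0]
    refine Finset.sum_congr rfl fun z _ => ?_
    congr 1
    rw [Finset.filter_filter]
    ext i
    simp only [Finset.mem_filter]
    tauto
  -- all fibers have the same size
  have hsame : ∀ z : ZMod r,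
      ((range (q ^ m)).filter
        (fun i => 1 ≤ wt q m i ∧ wt q m i ≤ ℓ ∧ (i : ZMod r) = z)).card
      = ((range (q ^ m)).filter
        (fun i => 1 ≤ wt q m i ∧ wt q m i ≤ ℓ ∧ (i : ZMod r) = 1)).card := by
    intro z
    have h := cardA_shift (m := m) (ℓ := ℓ) hq hr hrq 1 (z - 1).val
    have hz : (1 : ZMod r) + ((z - 1).val : ZMod r) = z := by
      rw [ZMod.natCast_val, ZMod.cast_id]
      ring
    rw [hz] at h
    exact h.symm
  -- count B by weight
  have hB : ((range (q ^ m)).filter (fun i => 1 ≤ wt q m i ∧ wt q m i ≤ ℓ)).card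
      = ∑ w ∈ Icc 1 ℓ, m.choose w * (q - 1) ^ w := by
    have hB0 := Finset.card_eq_sum_card_fiberwise
      (s := (range (q ^ m)).filter (fun i => 1 ≤ wt q m i ∧ wt q m i ≤ ℓ))
      (f := fun i : ℕ => wt q m i) (t := Icc 1 ℓ)
      (fun i hi => by
        simp only [Finset.coe_filter, Finset.mem_coe, Finset.mem_filter, Set.mem_setOf_eq] at hi
        exact Finset.mem_Icc.2 ⟨hi.2.1, hi.2.2⟩)
    rw [hB0]
    refine Finset.sum_congr rfl fun w hw => ?_
    rw [Finset.mem_Icc] at hw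
    rw [← card_wt hq m w]
    congr 1
    rw [Finset.filter_filter]
    ext i
    simp only [Finset.mem_filter, Finset.mem_range]
    constructor
    · rintro ⟨h1, ⟨h2, h3⟩, h4⟩; exact ⟨h1, h4⟩
    · rintro ⟨h1, h4⟩; exact ⟨h1, ⟨by omega, by omega⟩, h4⟩
  calc r * ((range (q ^ m)).filter
        (fun i => 1 ≤ wt q m i ∧ wt q m i ≤ ℓ ∧ (i : ZMod r) = 1)).card
      = ∑ _z : ZMod r, ((range (q ^ m)).filter
          (fun i => 1 ≤ wt q m i ∧ wt q m i ≤ ℓ ∧ (i : ZMod r) = 1)).card := by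
        rw [Finset.sum_const, Finset.card_univ, ZMod.card, smul_eq_mul]
    _ = ∑ z : ZMod r, ((range (q ^ m)).filter
          (fun i => 1 ≤ wt q m i ∧ wt q m i ≤ ℓ ∧ (i : ZMod r) = z)).card :=
        (Finset.sum_congr rfl fun z _ => (hsame z).symm)
    _ = ((range (q ^ m)).filter (fun i => 1 ≤ wt q m i ∧ wt q m i ≤ ℓ)).card := hfib.symm
    _ = ∑ w ∈ Icc 1 ℓ, m.choose w * (q - 1) ^ w := hB
end

/-- elements fixed by x ↦ x^q lie in the image of the subfield -/
lemma fixed_mem_range {F E : Type*} [Field F] [Fintype F] [Field E] [Algebra F E]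
    {x : E} (hx : x ^ (Fintype.card F) = x) : x ∈ (algebraMap F E).range := by
  classical
  set q := Fintype.card F with hqdef
  have hq : 1 < q := Fintype.one_lt_card
  set P : Polynomial E := X ^ q - X with hP
  have hPne : P ≠ 0 := FiniteField.X_pow_card_sub_X_ne_zero E hq
  have hPdeg : P.natDegree = q := FiniteField.X_pow_card_sub_X_natDegree_eq E hq
  set T : Finset E := Finset.univ.image (algebraMap F E) with hT
  have hTcard : T.card = q := by
    rw [hT, Finset.card_image_of_injective _ (algebraMap F E).injective, Finset.card_univ]
  have hroot : ∀ y : E, y ^ q = y → y ∈ P.roots.toFinset := by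
    intro y hy
    rw [Multiset.mem_toFinset, mem_roots hPne]
    simp [hP, IsRoot, hy]
  have hTsub : T ⊆ P.roots.toFinset := by
    intro y hy
    rw [hT, Finset.mem_image] at hy
    obtain ⟨x₀, -, rfl⟩ := hy
    apply hroot
    rw [← map_pow, FiniteField.pow_card]
  have hle : P.roots.toFinset.card ≤ T.card := by
    rw [hTcard]
    calc P.roots.toFinset.card ≤ Multiset.card P.roots := Multiset.toFinset_card_le _
      _ ≤ P.natDegree := P.card_roots'
      _ = q := hPdeg
  have hTeq : T = P.roots.toFinset := Finset.eq_of_subset_of_card_le hTsub hle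
  have hxmem : x ∈ P.roots.toFinset := hroot x hx
  rw [← hTeq, hT, Finset.mem_image] at hxmem
  obtain ⟨x₀, -, hx₀⟩ := hxmem
  exact ⟨x₀, hx₀⟩

/-- a polynomial with many distinct roots is divisible by the product of X - root -/
lemma prod_dvd_of_roots {E : Type*} [Field E] {P : Polynomial E} {D : Finset ℕ} {β : E}
    (hinj : Set.InjOn (fun i => β ^ i) D)
    (hroot : ∀ i ∈ D, P.eval (β ^ i) = 0) (hP : P ≠ 0) :
    (∏ i ∈ D, (X - C (β ^ i))) ∣ P := by
  classical
  set M : Multiset E := D.val.map (fun i => β ^ i) with hM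
  have hnodup : M.Nodup :=
    Multiset.Nodup.map_on (fun a ha b hb h => hinj ha hb h) D.nodup
  have hle : M ≤ P.roots := by
    rw [Multiset.le_iff_count]
    intro a
    by_cases ha : a ∈ M
    · rw [Multiset.count_eq_one_of_mem hnodup ha]
      rw [hM, Multiset.mem_map] at ha
      obtain ⟨i, hi, rfl⟩ := ha
      apply Multiset.one_le_count_iff_mem.2
      rw [Polynomial.mem_roots hP]
      exact hroot i hi
    · rw [Multiset.count_eq_zero_of_notMem ha]
      exact Nat.zero_le _
  have heq : (∏ i ∈ D, (X - C (β ^ i))) = (M.map (fun a => X - C a)).prod := by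
    rw [Finset.prod_eq_multiset_prod, hM, Multiset.map_map]
    rfl
  rw [heq]
  exact (Multiset.prod_dvd_prod_of_le (Multiset.map_le_map hle)).trans
    P.prod_multiset_X_sub_C_dvd

/-- dimension of polynomials of degree < n divisible by a fixed monic polynomial -/
lemma finrank_span_inf_degreeLT {F : Type*} [Field F] (g : Polynomial F) (hg : g.Monic)
    (n : ℕ) (hdeg : g.natDegree ≤ n) :
    Module.finrank F
      ↥((Ideal.span {g}).restrictScalars F ⊓ degreeLT F n) = n - g.natDegree := by
  classical
  set k := g.natDegree with hk
  have hgne : g ≠ 0 := hg.ne_zero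
  set μ : Polynomial F →ₗ[F] Polynomial F := LinearMap.mulLeft F g with hμ
  have hμinj : Function.Injective μ := fun a b hab => by
    simpa [hμ, LinearMap.mulLeft_apply] using mul_left_cancel₀ hgne (by simpa [hμ] using hab)
  have hset : (Ideal.span {g}).restrictScalars F ⊓ degreeLT F n
      = Submodule.map μ (degreeLT F (n - k)) := by
    ext p
    simp only [Submodule.mem_inf, Submodule.restrictScalars_mem, Ideal.mem_span_singleton,
      Submodule.mem_map]
    constructor
    · rintro ⟨⟨u, rfl⟩, hlt⟩
      refine ⟨u, ?_, by simp [hμ]⟩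
      rcases eq_or_ne u 0 with rfl | hu
      · rw [mem_degreeLT, degree_zero]
        exact WithBot.bot_lt_coe _
      · have hgu : g * u ≠ 0 := mul_ne_zero hgne hu
        rw [mem_degreeLT, degree_eq_natDegree hgu, Nat.cast_lt, natDegree_mul hgne hu] at hlt
        rw [mem_degreeLT, degree_eq_natDegree hu, Nat.cast_lt]
        omega
    · rintro ⟨u, hu, rfl⟩
      simp only [hμ, LinearMap.mulLeft_apply]
      refine ⟨⟨u, rfl⟩, ?_⟩
      rcases eq_or_ne u 0 with rfl | hune
      · rw [mul_zero]
        exact zero_mem _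
      · have hgu : g * u ≠ 0 := mul_ne_zero hgne hune
        rw [mem_degreeLT, degree_eq_natDegree hune, Nat.cast_lt] at hu
        rw [mem_degreeLT, degree_eq_natDegree hgu, Nat.cast_lt, natDegree_mul hgne hune]
        omega
  rw [hset,
    ← (Submodule.equivMapOfInjective μ hμinj (degreeLT F (n - k))).finrank_eq,
    (degreeLTEquiv F (n - k)).finrank_eq]
  simp [Module.finrank_pi]

theorem dim_code {F E : Type*} [Field F] [Fintype F] [Field E] [Algebra F E]
    (β : E) (D : Finset ℕ) (n : ℕ)
    (hD : ∀ i ∈ D, i < orderOf β)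
    (hρ : ∀ i ∈ D, i * Fintype.card F % orderOf β ∈ D)
    (hcard : D.card ≤ n) :
    Module.finrank F ↥(constaCode (F := F) β D n) = n - D.card := by
  classical
  set q := Fintype.card F with hqdef
  set N := orderOf β with hNdef
  have hq : 1 < q := Fintype.one_lt_card
  have halg : Function.Injective (algebraMap F E) := (algebraMap F E).injective
  -- the injectivity of i ↦ β^i on D
  have hβinj : Set.InjOn (fun i => β ^ i) D := fun a ha b hb h =>
    pow_injOn_Iio_orderOf (Set.mem_Iio.2 (hD a ha)) (Set.mem_Iio.2 (hD b hb)) h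
  -- the product polynomial over E
  set g : Polynomial E := ∏ i ∈ D, (X - C (β ^ i)) with hg
  have hgmonic : g.Monic := monic_prod_of_monic _ _ fun i _ => monic_X_sub_C _
  have hgdeg : g.natDegree = D.card := by
    rw [hg, natDegree_prod_of_monic _ _ fun i _ => monic_X_sub_C _]
    simp only [natDegree_X_sub_C]
    rw [Finset.sum_const, smul_eq_mul, mul_one]
  -- Frobenius invariance
  obtain ⟨k, hp, hcardF⟩ := FiniteField.card F (ringChar F)
  haveI : CharP E (ringChar F) := charP_of_injective_algebraMap halg (ringChar F)
  haveI : Fact (Nat.Prime (ringChar F)) := ⟨hp⟩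
  haveI : ExpChar E (ringChar F) := ExpChar.prime hp
  set φ : E →+* E := iterateFrobenius E (ringChar F) k with hφdef
  have hφ : ∀ x : E, φ x = x ^ q := fun x => by
    rw [hφdef, iterateFrobenius_def, hqdef, hcardF]
  have hφinj : Function.Injective φ := φ.injective
  have himg : Finset.image (fun i => i * q % N) D = D := by
    apply Finset.eq_of_subset_of_card_le
    · intro j hj
      rw [Finset.mem_image] at hj
      obtain ⟨i, hi, rfl⟩ := hj
      exact hρ i hi
    · apply le_of_eq
      symm
      apply Finset.card_image_of_injOn
      intro a ha b hb hab
      have hab' : a * q % N = b * q % N := hab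
      have h1 : β ^ (a * q % N) = β ^ (b * q % N) := by rw [hab']
      rw [hNdef, pow_mod_orderOf, pow_mod_orderOf, pow_mul, pow_mul] at h1
      have h2 : β ^ a = β ^ b := by
        apply hφinj
        rw [hφ, hφ]
        exact h1
      exact hβinj ha hb h2
  have hmapg : g.map φ = g := by
    rw [hg, Polynomial.map_prod]
    have hterm : ∀ i ∈ D, (X - C (β ^ i)).map φ = X - C (β ^ (i * q % N)) := by
      intro i hi
      rw [Polynomial.map_sub, Polynomial.map_X, Polynomial.map_C, hφ,
        ← pow_mul, hNdef, pow_mod_orderOf]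
    rw [Finset.prod_congr rfl hterm]
    have := Finset.prod_image (f := fun j => X - C (β ^ j)) (g := fun i => i * q % N)
      (s := D) ?_
    · rw [← this, himg]
    · intro a ha b hb hab
      have hab' : a * q % N = b * q % N := hab
      have h1 : β ^ (a * q % N) = β ^ (b * q % N) := by rw [hab']
      rw [hNdef, pow_mod_orderOf, pow_mod_orderOf, pow_mul, pow_mul] at h1
      exact hβinj ha hb (hφinj (by rw [hφ, hφ]; exact h1))
  -- descend g to F
  have hcoeff : ∀ t, g.coeff t ∈ Set.range (algebraMap F E) := by
    intro t
    have h1 : φ (g.coeff t) = g.coeff t := by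
      conv_rhs => rw [← hmapg]
      rw [Polynomial.coeff_map]
    have h2 : (g.coeff t) ^ q = g.coeff t := by rw [← hφ]; exact h1
    obtain ⟨x₀, hx₀⟩ := fixed_mem_range (F := F) h2
    exact ⟨x₀, hx₀⟩
  obtain ⟨g₀, hg₀⟩ : ∃ g₀ : Polynomial F, g₀.map (algebraMap F E) = g :=
    (Polynomial.mem_lifts _).1 ((Polynomial.lifts_iff_coeff_lifts g).2 hcoeff)
  have hg₀monic : g₀.Monic := by
    apply Polynomial.monic_of_injective halg
    rw [hg₀]
    exact hgmonic
  have hg₀deg : g₀.natDegree = D.card := by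
    rw [← hgdeg, ← hg₀, Polynomial.natDegree_map_eq_of_injective halg]
  -- identify the code with the set of polynomials of degree < n divisible by g₀
  set T := degreeLT F n with hT
  set S := (Ideal.span {g₀}).restrictScalars F with hS
  set Ψ := (degreeLTEquiv F n).symm with hΨ
  -- membership criterion
  have hmem : ∀ c : Fin n → F,
      c ∈ constaCode (F := F) β D n ↔ g₀ ∣ ((Ψ c : Polynomial F)) := by
    intro c
    have hPc : (Ψ c : Polynomial F) = ∑ t : Fin n, monomial (t : ℕ) (c t) := rfl
    have haev : ∀ i : ℕ, (aeval (β ^ i)) (Ψ c : Polynomial F)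
        = ∑ t : Fin n, β ^ (i * (t : ℕ)) * algebraMap F E (c t) := by
      intro i
      rw [hPc, map_sum]
      refine Finset.sum_congr rfl fun t _ => ?_
      rw [aeval_monomial, ← pow_mul, mul_comm]
    have hcode : c ∈ constaCode (F := F) β D n ↔
        ∀ i ∈ D, (aeval (β ^ i)) (Ψ c : Polynomial F) = 0 := by
      rw [constaCode]
      simp only [Submodule.mem_iInf, LinearMap.mem_ker, LinearMap.sum_apply,
        LinearMap.smul_apply, LinearMap.comp_apply, Algebra.linearMap_apply,
        LinearMap.proj_apply, smul_eq_mul]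
      constructor
      · intro h i hi
        rw [haev i]
        exact h i hi
      · intro h i hi
        have := h i hi
        rw [haev i] at this
        exact this
    rw [hcode]
    constructor
    · intro h
      rcases eq_or_ne ((Ψ c : Polynomial F)) 0 with h0 | h0
      · rw [h0]; exact dvd_zero _
      · have hmne : ((Ψ c : Polynomial F)).map (algebraMap F E) ≠ 0 :=
          (Polynomial.map_ne_zero_iff halg).2 h0
        have hroots : ∀ i ∈ D, (((Ψ c : Polynomial F)).map (algebraMap F E)).eval (β ^ i) = 0 := by
          intro i hi
          have := h i hi
          rwa [Polynomial.aeval_def, Polynomial.eval₂_eq_eval_map] at this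
        have hdvd : g ∣ ((Ψ c : Polynomial F)).map (algebraMap F E) := by
          rw [hg]
          exact prod_dvd_of_roots hβinj hroots hmne
        rw [← hg₀] at hdvd
        exact (Polynomial.map_dvd_map _ halg hg₀monic).1 hdvd
    · rintro ⟨u, hu⟩ i hi
      rw [hu, map_mul]
      have : (aeval (β ^ i)) g₀ = 0 := by
        rw [Polynomial.aeval_def, Polynomial.eval₂_eq_eval_map, hg₀, hg, eval_prod]
        apply Finset.prod_eq_zero hi
        rw [eval_sub, eval_X, eval_C, sub_self]
      rw [this, zero_mul]
  -- rewrite the code as a comap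
  have hcode_eq : constaCode (F := F) β D n
      = Submodule.comap (Ψ : (Fin n → F) →ₗ[F] T) (Submodule.comap T.subtype S) := by
    ext c
    rw [hmem c]
    simp only [Submodule.mem_comap, LinearEquiv.coe_coe, Submodule.coe_subtype, hS,
      Submodule.restrictScalars_mem, Ideal.mem_span_singleton]
  have hST : Submodule.comap T.subtype S = Submodule.comap T.subtype (S ⊓ T) := by
    ext x
    simp only [Submodule.mem_comap, Submodule.mem_inf]
    exact ⟨fun h => ⟨h, x.2⟩, fun h => h.1⟩
  rw [hcode_eq, Submodule.comap_equiv_eq_map_symm]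
  rw [LinearEquiv.finrank_map_eq, hST]
  rw [(Submodule.comapSubtypeEquivOfLe inf_le_right).finrank_eq]
  rw [← hg₀deg]
  exact finrank_span_inf_degreeLT g₀ hg₀monic n (by rw [hg₀deg]; exact hcard)

end StmtAux

open Finset StmtAux in
theorem stmt_10 {F E : Type*} [Field F] [Fintype F] [Field E] [Fintype E] [Algebra F E]
    (q m r ℓ : ℕ) (hq : q = Fintype.card F) (hE : Fintype.card E = q ^ m)
    (hm : 2 ≤ m) (hr : 1 < r) (hrq : r ∣ q - 1) (hℓ1 : 1 ≤ ℓ) (hℓ2 : ℓ ≤ m - 1)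
    (β : E) (hβ : orderOf β = q ^ m - 1) :
    Module.finrank F ↥(constaCode (F := F) β
        ((Finset.range (q ^ m - 1)).filter
          (fun i => 1 ≤ ((Nat.digits q i).filter (· ≠ 0)).length ∧
            ((Nat.digits q i).filter (· ≠ 0)).length ≤ ℓ ∧ i % r = 1))
        ((q ^ m - 1) / r))
      = (q ^ m - ∑ i ∈ Finset.range (ℓ + 1), m.choose i * (q - 1) ^ i) / r := by
  classical
  have hq2 : 1 < q := hq ▸ Fintype.one_lt_card
  have hNq : 1 ≤ q ^ m := Nat.one_le_pow _ _ (by omega)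
  haveI : NeZero r := ⟨by omega⟩
  -- translate the digits-based defining set into the wt-based one
  have hsets : (Finset.range (q ^ m - 1)).filter
        (fun i => 1 ≤ ((Nat.digits q i).filter (· ≠ 0)).length ∧
          ((Nat.digits q i).filter (· ≠ 0)).length ≤ ℓ ∧ i % r = 1)
      = (Finset.range (q ^ m - 1)).filter
        (fun i => 1 ≤ wt q m i ∧ wt q m i ≤ ℓ ∧ i % r = 1) := by
    apply Finset.filter_congr
    intro i hi
    rw [Finset.mem_range] at hi
    rw [digits_wt hq2 m i (by omega)]
  rw [hsets]
  set D := (Finset.range (q ^ m - 1)).filter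
        (fun i => 1 ≤ wt q m i ∧ wt q m i ≤ ℓ ∧ i % r = 1) with hD
  -- counting
  have hcount : r * D.card = ∑ w ∈ Icc 1 ℓ, m.choose w * (q - 1) ^ w :=
    count_main hq2 hm hr hrq hℓ1 hℓ2
  set S := ∑ w ∈ Icc 1 ℓ, m.choose w * (q - 1) ^ w with hS
  -- the full binomial sum
  have hbinom : ∑ i ∈ Finset.range (m + 1), m.choose i * (q - 1) ^ i = q ^ m := by
    have h := add_pow (q - 1) 1 m (R := ℕ)
    have hq1 : q - 1 + 1 = q := by omega
    rw [hq1] at h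
    rw [h]
    refine Finset.sum_congr rfl fun i _ => ?_
    rw [one_pow, mul_one, mul_comm, Nat.cast_id]
  have hSfull : ∑ i ∈ Finset.range (ℓ + 1), m.choose i * (q - 1) ^ i = 1 + S := by
    rw [Finset.sum_range_succ' (fun i => m.choose i * (q - 1) ^ i) ℓ]
    have hIcc : ∑ w ∈ Icc 1 ℓ, m.choose w * (q - 1) ^ w
        = ∑ k ∈ range ℓ, m.choose (k + 1) * (q - 1) ^ (k + 1) := by
      rw [← Finset.Ico_add_one_right_eq_Icc, Finset.sum_Ico_eq_sum_range]
      exact Finset.sum_congr rfl fun k _ => by rw [add_comm 1 k]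
    rw [hS, hIcc, Nat.choose_zero_right, pow_zero, mul_one, add_comm]
  have hSle : 1 + S ≤ q ^ m := by
    rw [← hSfull, ← hbinom]
    apply Finset.sum_le_sum_of_subset
    apply Finset.range_subset_range.2
    omega
  have hq1 : (q : ZMod r) = 1 := by
    have hd : ((q - 1 : ℕ) : ZMod r) = 0 := (ZMod.natCast_eq_zero_iff _ _).2 hrq
    have he : q = (q - 1) + 1 := by omega
    rw [he, Nat.cast_add, hd, Nat.cast_one, zero_add]
  have hrN : r ∣ q ^ m - 1 := by
    have hz : ((q ^ m - 1 : ℕ) : ZMod r) = 0 := by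
      rw [Nat.cast_sub hNq]
      push_cast [hq1]
      simp
    exact (ZMod.natCast_eq_zero_iff _ _).1 hz
  have hrS : r ∣ S := ⟨D.card, hcount.symm⟩
  have hcard_le : D.card ≤ (q ^ m - 1) / r := by
    have h1 : D.card = S / r := by
      rw [← hcount, Nat.mul_div_cancel_left _ (show 0 < r by omega)]
    rw [h1]
    apply Nat.div_le_div_right
    omega
  -- apply the dimension formula
  have hDlt : ∀ i ∈ D, i < orderOf β := by
    intro i hi
    rw [hβ]
    rw [hD, Finset.mem_filter, Finset.mem_range] at hi
    exact hi.1
  have hρ : ∀ i ∈ D, i * Fintype.card F % orderOf β ∈ D := by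
    intro i hi
    rw [hβ, ← hq]
    rw [hD, Finset.mem_filter, Finset.mem_range] at hi
    obtain ⟨h1, h2, h3, h4⟩ := hi
    have hw : wt q m i ≤ m - 1 := le_trans h3 hℓ2
    obtain ⟨hwt, hres⟩ := rho_lemma hq2 hm hr hrq h1 hw
    rw [hD, Finset.mem_filter, Finset.mem_range]
    exact ⟨Nat.mod_lt _ (by omega), by rw [hwt]; exact h2, by rw [hwt]; exact h3,
      by rw [hres]; exact h4⟩
  rw [dim_code β D ((q ^ m - 1) / r) hDlt hρ hcard_le]
  -- final arithmetic
  rw [hSfull]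
  obtain ⟨a, ha⟩ := hrN
  obtain ⟨b, hb⟩ := hrS
  have hb' : D.card = b := Nat.eq_of_mul_eq_mul_left (show 0 < r by omega)
    (by rw [hcount, hb])
  have hab : b ≤ a := by
    exact Nat.le_of_mul_le_mul_left (by omega) (show 0 < r by omega)
  have key1 : q ^ m - (1 + S) = r * (a - b) := by
    have hd : r * a = r * b + r * (a - b) := by
      rw [← Nat.mul_add]
      congr 1
      omega
    omega
  rw [key1, ha, hb', Nat.mul_div_cancel_left _ (show 0 < r by omega),
    Nat.mul_div_cancel_left _ (show 0 < r by omega)]
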